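/- Let ψ > 0, ν₁ > 0, C > 0, s ≥ 0 and 0 < ω < 1. Then the oil spot price as a function of oil production, E₁ ↦ P₁(E₁) := ψ·ν₁·C·E₁^(ω−1)/(ν₁E₁^ω + s), is strictly decreasing on (0, ∞). -/
import Mathlib


open Real

/-- The oil spot price is strictly decreasing in oil production: for
`ψ, ν₁, C > 0`, `s ≥ 0` and `0 < ω < 1`, the map
`E₁ ↦ ψν₁C·E₁^(ω−1)/(ν₁E₁^ω + s)` is strictly decreasing on `(0, ∞)`. -/
theorem stmt_9 (ψ ν₁ C s ω : ℝ)
    (hψ : 0 < ψ) (hν₁ : 0 < ν₁) (hC : 0 < C) (hs : 0 ≤ s)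
    (hω₀ : 0 < ω) (hω₁ : ω < 1) :
    StrictAntiOn (fun E₁ : ℝ => ψ * ν₁ * C * E₁ ^ (ω - 1) / (ν₁ * E₁ ^ ω + s))
      (Set.Ioi 0) := by
  intro x hx y hy hxy
  simp only [Set.mem_Ioi] at hx hy
  have hK : 0 < ψ * ν₁ * C := by positivity
  have hdx : 0 < ν₁ * x ^ ω + s := by positivity
  have hdy : 0 < ν₁ * y ^ ω + s := by positivity
  have hnum : y ^ (ω - 1) < x ^ (ω - 1) :=
    Real.rpow_lt_rpow_of_neg hx hxy (by linarith)
  have hden : ν₁ * x ^ ω + s < ν₁ * y ^ ω + s := by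
    have := Real.rpow_lt_rpow hx.le hxy hω₀
    nlinarith
  have hny : 0 < y ^ (ω - 1) := Real.rpow_pos_of_pos hy _
  rw [div_lt_div_iff₀ hdy hdx]
  have h1 : ψ * ν₁ * C * y ^ (ω - 1) < ψ * ν₁ * C * x ^ (ω - 1) := by
    exact mul_lt_mul_of_pos_left hnum hK
  nlinarith [mul_pos hK hny]
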